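/- Let T have a Gamma distribution with shape k ∈ (0,1) and rate θ > 0. Then the capacity λ̄₂(q) = q/((E[e^{-qT}])^{-1} - 1) = q/((1+q/θ)^k - 1) is strictly increasing in q on (0,∞) and tends to ∞ as q → ∞. -/

import Mathlib

open Real Filter

/-- Key inequality: for `x > 1` and `0 < k < 1`,
`x^k - 1 - k * x^(k-1) * (x - 1) > 0` (tangent line of `x^k` at `x` exceeds value at `1`). -/
lemma gamma_key_ineq {k x : ℝ} (hk0 : 0 < k) (hk1 : k < 1) (hx : 1 < x) :
    0 < x ^ k - 1 - k * x ^ (k - 1) * (x - 1) := by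
  have hx0 : 0 < x := lt_trans one_pos hx
  have hs : (1 : ℝ) + (1/x - 1) = 1/x := by ring
  have hmem : -1 ≤ 1/x - 1 := by
    have : (0:ℝ) < 1/x := by positivity
    linarith
  have hne : 1/x - 1 ≠ 0 := by
    have : 1/x < 1 := by
      rw [div_lt_one hx0]; exact hx
    linarith
  have hbern := rpow_one_add_lt_one_add_mul_self hmem hne hk0 hk1
  rw [hs] at hbern
  -- (1/x)^k < 1 + k*(1/x - 1); multiply by x^k
  have hxk : 0 < x ^ k := rpow_pos_of_pos hx0 k
  have h1 : (1/x : ℝ) ^ k = x ^ (-k) := by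
    rw [one_div, Real.inv_rpow hx0.le, ← Real.rpow_neg hx0.le]
  have h2 : x ^ (-k) * x ^ k = 1 := by
    rw [← rpow_add hx0]; simp
  have h3 : x ^ (k - 1) = x ^ k / x := by
    rw [rpow_sub hx0, rpow_one]
  have := mul_lt_mul_of_pos_right hbern hxk
  rw [h1] at this
  have hmain : 1 < (1 + k * (1/x - 1)) * x ^ k := by rwa [h2] at this
  have hexp : (1 + k * (1/x - 1)) * x ^ k
      = x ^ k - k * x ^ (k - 1) * (x - 1) := by
    rw [h3]; field_simp; ring
  rw [hexp] at hmain
  linarith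

theorem gamma_headway_B2_capacity (k θ : ℝ) (hk0 : 0 < k) (hk1 : k < 1) (hθ : 0 < θ) :
    StrictMonoOn (fun q : ℝ => q / ((1 + q / θ) ^ k - 1)) (Set.Ioi (0:ℝ)) ∧
    Tendsto (fun q : ℝ => q / ((1 + q / θ) ^ k - 1)) atTop atTop := by
  set f : ℝ → ℝ := fun q => q / ((1 + q / θ) ^ k - 1) with hf
  have hx1 : ∀ q : ℝ, 0 < q → 1 < 1 + q / θ := fun q hq => by
    have : 0 < q / θ := div_pos hq hθ
    linarith
  have hD : ∀ q : ℝ, 0 < q → 0 < (1 + q / θ) ^ k - 1 := fun q hq => by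
    have h1 := hx1 q hq
    have : 1 < (1 + q / θ) ^ k := one_lt_rpow_iff_of_pos (by linarith) |>.2 (Or.inl ⟨h1, hk0⟩)
    linarith
  -- derivative of f at q > 0
  have hderiv : ∀ q : ℝ, 0 < q → HasDerivAt f
      ((1 * ((1 + q / θ) ^ k - 1) - q * (k * (1 + q / θ) ^ (k - 1) * (1/θ))) /
        ((1 + q / θ) ^ k - 1) ^ 2) q := by
    intro q hq
    have hu : HasDerivAt (fun q : ℝ => 1 + q / θ) (1/θ) q := by
      simpa using ((hasDerivAt_id q).div_const θ).const_add 1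
    have hbase : (1 : ℝ) + q / θ ≠ 0 := by have := hx1 q hq; linarith
    have hv : HasDerivAt (fun q : ℝ => (1 + q / θ) ^ k - 1)
        (k * (1 + q / θ) ^ (k - 1) * (1/θ)) q := by
      have := (Real.hasDerivAt_rpow_const (x := 1 + q / θ) (p := k) (Or.inl hbase)).comp q hu
      simpa [mul_comm, mul_assoc] using this.sub_const 1
    exact (hasDerivAt_id q).div hv (hD q hq).ne'
  constructor
  · apply strictMonoOn_of_deriv_pos (convex_Ioi 0)
    · intro q hq
      exact ((hderiv q hq).continuousAt).continuousWithinAt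
    · intro q hq
      rw [interior_Ioi] at hq
      rw [(hderiv q hq).deriv]
      apply div_pos
      · have hkey := gamma_key_ineq hk0 hk1 (hx1 q hq)
        have hqθ : q * (1/θ) = (1 + q/θ) - 1 := by field_simp; ring
        calc (0:ℝ) < (1 + q/θ) ^ k - 1 - k * (1 + q/θ) ^ (k - 1) * ((1 + q/θ) - 1) := hkey
          _ = 1 * ((1 + q / θ) ^ k - 1) - q * (k * (1 + q / θ) ^ (k - 1) * (1/θ)) := by
              rw [← hqθ]; ring
      · exact pow_pos (hD q hq) 2
  · -- tendsto atTop: f q ≥ (θ/2)^k * q^(1-k) for large q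
    have hbound : ∀ᶠ q in atTop, (θ/2) ^ k * q ^ (1 - k) ≤ f q := by
      filter_upwards [eventually_ge_atTop (max θ 1)] with q hq
      have hqθ' : θ ≤ q := le_trans (le_max_left _ _) hq
      have hq1 : (1:ℝ) ≤ q := le_trans (le_max_right _ _) hq
      have hq0 : 0 < q := lt_of_lt_of_le one_pos hq1
      have hle : 1 + q / θ ≤ 2 * q / θ := by
        have h1 : (1:ℝ) ≤ q / θ := (one_le_div hθ).2 hqθ'
        rw [mul_div_assoc]
        linarith
      have hpos : (0:ℝ) < 1 + q / θ := by positivity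
      have hDle : (1 + q / θ) ^ k - 1 ≤ (2 * q / θ) ^ k :=
        le_trans (by linarith [rpow_pos_of_pos hpos k])
          (rpow_le_rpow hpos.le hle hk0.le)
      have hD2 : (0:ℝ) < (2 * q / θ) ^ k := by positivity
      have h1 : q / (2 * q / θ) ^ k ≤ f q :=
        div_le_div_of_nonneg_left hq0.le (hD q hq0) hDle
      refine le_trans (le_of_eq ?_) h1
      rw [eq_div_iff hD2.ne']
      have h2 : (2 * q / θ) ^ k = (2/θ) ^ k * q ^ k := by
        rw [← Real.mul_rpow (by positivity) hq0.le]
        ring_nf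
      rw [h2]
      have h3 : (θ/2 : ℝ) ^ k * (2/θ) ^ k = 1 := by
        rw [← Real.mul_rpow (by positivity) (by positivity)]
        rw [show (θ/2) * (2/θ) = 1 by field_simp]
        simp
      have h4 : q ^ (1 - k) * q ^ k = q := by
        rw [← rpow_add hq0]; simp
      calc (θ/2) ^ k * q ^ (1-k) * ((2/θ) ^ k * q ^ k)
          = ((θ/2) ^ k * (2/θ) ^ k) * (q ^ (1-k) * q ^ k) := by ring
        _ = q := by rw [h3, h4, one_mul]
    refine tendsto_atTop_mono' _ hbound ?_
    have : Tendsto (fun q : ℝ => q ^ (1 - k)) atTop atTop :=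
      tendsto_rpow_atTop (by linarith)
    exact this.const_mul_atTop (by positivity)
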